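/- For a complete and decomposable SPN S, the root value V_root(x; w) equals the sum over all induced trees T_t of S of (∏_{(k,j) ∈ edges(T_t) from sum nodes} w_{k,j}) · (∏_{leaves ℓ ∈ T_t} V_ℓ(x)), i.e., the network polynomial admits the induced-tree decomposition. -/

import Mathlib

open scoped Classical

/-- The kind of a node in a sum-product network. -/
inductive NodeKind | sum | prod | leaf
deriving DecidableEq

/-- A sum-product network (SPN) over variables `X_1, …, X_n`: a rooted DAG with `N` nodes
(indexed so that edges go from larger to smaller indices), where each node is a sum node,
a product node, or a leaf labelled with a variable, and sum edges carry weights. -/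
structure SPN (N n : ℕ) where
  kind : Fin N → NodeKind
  children : Fin N → Finset (Fin N)
  var : Fin N → Fin n
  root : Fin N
  child_lt : ∀ k, ∀ j ∈ children k, j < k
  leaf_iff : ∀ k, kind k = NodeKind.leaf ↔ children k = ∅

namespace SPN

variable {N n : ℕ}

/-- Recursive evaluation of an SPN: leaves return their given values, product nodes multiply
their children's values, sum nodes take weighted sums of their children's values. -/
noncomputable def value (S : SPN N n) (leaf : Fin N → ℝ) (w : Fin N → Fin N → ℝ) :
    Fin N → ℝ
  | k =>
    match S.kind k with
    | NodeKind.leaf => leaf k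
    | NodeKind.prod => ∏ j ∈ (S.children k).attach, value S leaf w j.1
    | NodeKind.sum => ∑ j ∈ (S.children k).attach, w k j.1 * value S leaf w j.1
  termination_by k => (k : ℕ)
  decreasing_by all_goals exact S.child_lt _ _ j.2

/-- Evaluation where the value of the node `k₀` is overridden by the free value `t`
(used to differentiate the root value with respect to the value of node `k₀`). -/
noncomputable def valueAt (S : SPN N n) (leaf : Fin N → ℝ) (w : Fin N → Fin N → ℝ)
    (k₀ : Fin N) (t : ℝ) : Fin N → ℝ
  | k =>
    if k = k₀ then t else
      match S.kind k with
      | NodeKind.leaf => leaf k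
      | NodeKind.prod => ∏ j ∈ (S.children k).attach, valueAt S leaf w k₀ t j.1
      | NodeKind.sum => ∑ j ∈ (S.children k).attach, w k j.1 * valueAt S leaf w k₀ t j.1
  termination_by k => (k : ℕ)
  decreasing_by all_goals exact S.child_lt _ _ j.2

/-- The scope of a node: the set of variables appearing below it. -/
noncomputable def scope (S : SPN N n) : Fin N → Finset (Fin n)
  | k =>
    match S.kind k with
    | NodeKind.leaf => {S.var k}
    | _ => (S.children k).attach.biUnion (fun j => scope S j.1)
  termination_by k => (k : ℕ)
  decreasing_by all_goals exact S.child_lt _ _ j.2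

/-- An SPN is complete if all children of a sum node have the same scope. -/
def Complete (S : SPN N n) : Prop :=
  ∀ k, S.kind k = NodeKind.sum →
    ∀ j₁ ∈ S.children k, ∀ j₂ ∈ S.children k, S.scope j₁ = S.scope j₂

/-- An SPN is decomposable if distinct children of a product node have disjoint scopes. -/
def Decomposable (S : SPN N n) : Prop :=
  ∀ k, S.kind k = NodeKind.prod →
    ∀ j₁ ∈ S.children k, ∀ j₂ ∈ S.children k, j₁ ≠ j₂ →
      Disjoint (S.scope j₁) (S.scope j₂)

/-- `(TV, TE)` is an induced tree of the SPN `S`: it contains the root; its edges are edges of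
`S` between its nodes; every sum node in it has exactly one outgoing edge in it; every product
node in it keeps all its outgoing edges; and every non-root node in it is the endpoint of one
of its edges. -/
def IsInducedTree (S : SPN N n) (TV : Finset (Fin N)) (TE : Finset (Fin N × Fin N)) : Prop :=
  S.root ∈ TV ∧
  (∀ e ∈ TE, e.1 ∈ TV ∧ e.2 ∈ TV ∧ e.2 ∈ S.children e.1) ∧
  (∀ k ∈ TV, S.kind k = NodeKind.sum → ∃! j, j ∈ S.children k ∧ (k, j) ∈ TE) ∧
  (∀ k ∈ TV, S.kind k = NodeKind.prod → ∀ j ∈ S.children k, (k, j) ∈ TE) ∧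
  (∀ k ∈ TV, k ≠ S.root → ∃ e ∈ TE, e.2 = k)

end SPN


namespace SPN

variable {N n : ℕ}

/-- Generalization of `IsInducedTree` to an arbitrary root node. -/
def IsTreeAt (S : SPN N n) (r : Fin N) (TV : Finset (Fin N)) (TE : Finset (Fin N × Fin N)) : Prop :=
  r ∈ TV ∧
  (∀ e ∈ TE, e.1 ∈ TV ∧ e.2 ∈ TV ∧ e.2 ∈ S.children e.1) ∧
  (∀ k ∈ TV, S.kind k = NodeKind.sum → ∃! j, j ∈ S.children k ∧ (k, j) ∈ TE) ∧
  (∀ k ∈ TV, S.kind k = NodeKind.prod → ∀ j ∈ S.children k, (k, j) ∈ TE) ∧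
  (∀ k ∈ TV, k ≠ r → ∃ e ∈ TE, e.2 = k)

lemma scope_of_not_leaf (S : SPN N n) {k : Fin N} (h : S.kind k ≠ NodeKind.leaf) :
    S.scope k = (S.children k).attach.biUnion (fun j => S.scope j.1) := by
  rw [scope]
  rcases hk : S.kind k with _ | _ | _ <;> simp_all

lemma child_scope (S : SPN N n) {j k : Fin N} (hj : j ∈ S.children k) :
    S.scope j ⊆ S.scope k := by
  have hk : S.kind k ≠ NodeKind.leaf := by
    intro h
    rw [(S.leaf_iff k).1 h] at hj
    exact absurd hj (Finset.notMem_empty j)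
  rw [scope_of_not_leaf S hk]
  intro a ha
  exact Finset.mem_biUnion.2 ⟨⟨j, hj⟩, Finset.mem_attach _ _, ha⟩

lemma scope_nonempty_aux (S : SPN N n) : ∀ m : ℕ, ∀ k : Fin N, (k : ℕ) < m → (S.scope k).Nonempty := by
  intro m
  induction m with
  | zero => intro k hk; omega
  | succ m ih =>
    intro k hk
    by_cases h : S.kind k = NodeKind.leaf
    · exact ⟨S.var k, by rw [scope, h]; exact Finset.mem_singleton_self _⟩
    · obtain ⟨j, hj⟩ := Finset.nonempty_iff_ne_empty.2 (fun he => h ((S.leaf_iff k).2 he))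
      obtain ⟨a, ha⟩ := ih j (by have := Fin.lt_def.mp (S.child_lt k j hj); omega)
      exact ⟨a, (child_scope S hj) ha⟩

lemma scope_nonempty (S : SPN N n) (k : Fin N) : (S.scope k).Nonempty :=
  S.scope_nonempty_aux ((k : ℕ) + 1) k (Nat.lt_succ_self _)

lemma IsTreeAt.le {S : SPN N n} {r : Fin N} {TV : Finset (Fin N)} {TE : Finset (Fin N × Fin N)}
    (h : S.IsTreeAt r TV TE) {m : Fin N} (hm : m ∈ TV) : m ≤ r := by
  have hne : TV.Nonempty := ⟨r, h.1⟩
  have hmax : TV.max' hne = r := by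
    by_contra hmr
    obtain ⟨e, heE, he2⟩ := h.2.2.2.2 _ (TV.max'_mem hne) hmr
    have h1 := (h.2.1 e heE).1
    have h2 := S.child_lt e.1 e.2 (h.2.1 e heE).2.2
    have h3 := TV.le_max' e.1 h1
    rw [he2] at h2
    exact absurd (lt_of_lt_of_le h2 h3) (lt_irrefl _)
  exact hmax ▸ TV.le_max' m hm

lemma IsTreeAt.exists_child {S : SPN N n} {r : Fin N} {TV : Finset (Fin N)}
    {TE : Finset (Fin N × Fin N)} (h : S.IsTreeAt r TV TE) :
    ∀ m ∈ TV, m ≠ r → ∃ j ∈ S.children r, S.scope m ⊆ S.scope j := by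
  suffices H : ∀ d : ℕ, ∀ m ∈ TV, m ≠ r → (r : ℕ) - (m : ℕ) ≤ d →
      ∃ j ∈ S.children r, S.scope m ⊆ S.scope j by
    intro m hm hmr
    exact H (r : ℕ) m hm hmr (by omega)
  intro d
  induction d with
  | zero =>
    intro m hm hmr hd
    have h2 : (m : ℕ) ≤ (r : ℕ) := h.le hm
    have h3 : (m : ℕ) ≠ (r : ℕ) := fun hc => hmr (Fin.ext hc)
    omega
  | succ d ih =>
    intro m hm hmr hd
    obtain ⟨e, heE, he2⟩ := h.2.2.2.2 m hm hmr
    obtain ⟨h1, _, hc⟩ := h.2.1 e heE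
    have hlt : (m : ℕ) < (e.1 : ℕ) := by
      have := Fin.lt_def.mp (S.child_lt e.1 e.2 hc)
      rw [he2] at this
      exact this
    have hsub : S.scope m ⊆ S.scope e.1 := he2 ▸ child_scope S hc
    by_cases he1 : e.1 = r
    · refine ⟨m, ?_, subset_rfl⟩
      rw [← he1, ← he2]
      exact hc
    · have hle : (e.1 : ℕ) ≤ (r : ℕ) := h.le h1
      obtain ⟨j, hj, hs⟩ := ih e.1 h1 he1 (by omega)
      exact ⟨j, hj, hsub.trans hs⟩

lemma IsTreeAt.scope_subset {S : SPN N n} {r : Fin N} {TV : Finset (Fin N)}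
    {TE : Finset (Fin N × Fin N)} (h : S.IsTreeAt r TV TE) {m : Fin N}
    (hm : m ∈ TV) : S.scope m ⊆ S.scope r := by
  by_cases hmr : m = r
  · exact hmr ▸ subset_rfl
  · obtain ⟨j, hj, hs⟩ := h.exists_child m hm hmr
    exact hs.trans (child_scope S hj)

lemma tree_disjoint {S : SPN N n} (hD : S.Decomposable) {r : Fin N}
    (hk : S.kind r = NodeKind.prod)
    {j₁ j₂ : Fin N} (hj₁ : j₁ ∈ S.children r) (hj₂ : j₂ ∈ S.children r) (hne : j₁ ≠ j₂)
    {TV₁ TE₁ TV₂ TE₂} (h₁ : S.IsTreeAt j₁ TV₁ TE₁) (h₂ : S.IsTreeAt j₂ TV₂ TE₂)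
    {m : Fin N} (hm₁ : m ∈ TV₁) (hm₂ : m ∈ TV₂) : False := by
  have hd := hD r hk j₁ hj₁ j₂ hj₂ hne
  obtain ⟨a, ha⟩ := S.scope_nonempty m
  exact Finset.disjoint_left.1 hd (h₁.scope_subset hm₁ ha) (h₂.scope_subset hm₂ ha)

/-- The set of induced trees rooted at `r`. -/
noncomputable def treeSet (S : SPN N n) (r : Fin N) :
    Finset (Finset (Fin N) × Finset (Fin N × Fin N)) :=
  Finset.univ.filter (fun p => S.IsTreeAt r p.1 p.2)

lemma mem_treeSet {S : SPN N n} {r : Fin N} {p : Finset (Fin N) × Finset (Fin N × Fin N)} :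
    p ∈ S.treeSet r ↔ S.IsTreeAt r p.1 p.2 := by
  simp [treeSet]

/-- The weight of an induced tree. -/
noncomputable def twt (S : SPN N n) (leaf : Fin N → ℝ) (w : Fin N → Fin N → ℝ)
    (p : Finset (Fin N) × Finset (Fin N × Fin N)) : ℝ :=
  (∏ e ∈ p.2.filter (fun e => S.kind e.1 = NodeKind.sum), w e.1 e.2)
    * ∏ k ∈ p.1.filter (fun k => S.kind k = NodeKind.leaf), leaf k

lemma insert_tree_sum {S : SPN N n} {r j : Fin N} (hk : S.kind r = NodeKind.sum)
    (hj : j ∈ S.children r) {TV : Finset (Fin N)} {TE : Finset (Fin N × Fin N)}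
    (h : S.IsTreeAt j TV TE) :
    S.IsTreeAt r (insert r TV) (insert (r, j) TE) := by
  have hjr : (j : ℕ) < (r : ℕ) := Fin.lt_def.mp (S.child_lt r j hj)
  have hrTV : r ∉ TV := fun hr => by
    have : (r : ℕ) ≤ (j : ℕ) := h.le hr
    omega
  have hE1 : ∀ e ∈ TE, e.1 ≠ r := fun e he hr => hrTV (hr ▸ (h.2.1 e he).1)
  refine ⟨Finset.mem_insert_self r TV, ?_, ?_, ?_, ?_⟩
  · intro e he
    rcases Finset.mem_insert.1 he with heq | he'
    · rw [heq]
      exact ⟨Finset.mem_insert_self _ _, Finset.mem_insert_of_mem h.1, hj⟩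
    · obtain ⟨a, b, c⟩ := h.2.1 e he'
      exact ⟨Finset.mem_insert_of_mem a, Finset.mem_insert_of_mem b, c⟩
  · intro k hkTV hks
    rcases Finset.mem_insert.1 hkTV with heq | hk'
    · subst heq
      refine ⟨j, ⟨hj, Finset.mem_insert_self _ _⟩, ?_⟩
      rintro j' ⟨hj', hje'⟩
      rcases Finset.mem_insert.1 hje' with heq2 | hmem
      · exact congrArg Prod.snd heq2
      · exact absurd rfl (hE1 _ hmem)
    · obtain ⟨j', hj'ex, hj'uniq⟩ := h.2.2.1 k hk' hks
      refine ⟨j', ⟨hj'ex.1, Finset.mem_insert_of_mem hj'ex.2⟩, ?_⟩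
      rintro y ⟨hy1, hy2⟩
      rcases Finset.mem_insert.1 hy2 with heq2 | hmem
      · have hkr : k = r := congrArg Prod.fst heq2
        exact absurd (hkr ▸ hk') hrTV
      · exact hj'uniq y ⟨hy1, hmem⟩
  · intro k hkTV hkp
    rcases Finset.mem_insert.1 hkTV with heq | hk'
    · subst heq
      exact absurd (hk.symm.trans hkp) (by decide)
    · intro j' hj'
      exact Finset.mem_insert_of_mem (h.2.2.2.1 k hk' hkp j' hj')
  · intro k hkTV hkr
    have hk' : k ∈ TV := by
      rcases Finset.mem_insert.1 hkTV with heq | hmem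
      · exact absurd heq hkr
      · exact hmem
    by_cases hkj : k = j
    · exact ⟨(r, j), Finset.mem_insert_self _ _, hkj ▸ rfl⟩
    · obtain ⟨e, he, he2⟩ := h.2.2.2.2 k hk' hkj
      exact ⟨e, Finset.mem_insert_of_mem he, he2⟩

lemma erase_tree_sum {S : SPN N n} {r j : Fin N} (hk : S.kind r = NodeKind.sum)
    {TV : Finset (Fin N)} {TE : Finset (Fin N × Fin N)}
    (h : S.IsTreeAt r TV TE) (hj : j ∈ S.children r) (hje : (r, j) ∈ TE) :
    S.IsTreeAt j (TV.erase r) (TE.erase (r, j)) := by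
  have hne2 : ∀ e ∈ TE, e.2 ≠ r := by
    intro e he hr
    have h1 := (h.2.1 e he).1
    have h2 := Fin.lt_def.mp (S.child_lt e.1 e.2 (h.2.1 e he).2.2)
    have h3 : (e.1 : ℕ) ≤ (r : ℕ) := h.le h1
    rw [hr] at h2
    omega
  have huniqr : ∀ e ∈ TE, e.1 = r → e = (r, j) := by
    intro e he hr
    obtain ⟨j', hj'ex, hj'uniq⟩ := h.2.2.1 r h.1 hk
    have hj1 : j = j' := hj'uniq j ⟨hj, hje⟩
    have he2c : e.2 ∈ S.children r := hr ▸ (h.2.1 e he).2.2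
    have he2e : (r, e.2) ∈ TE := by
      rw [← hr]
      exact he
    have h2 : e.2 = j' := hj'uniq e.2 ⟨he2c, he2e⟩
    refine Prod.ext hr ?_
    rw [h2, ← hj1]
  refine ⟨?_, ?_, ?_, ?_, ?_⟩
  · exact Finset.mem_erase.2 ⟨Fin.ne_of_lt (S.child_lt r j hj), (h.2.1 (r, j) hje).2.1⟩
  · intro e he
    obtain ⟨hene, heTE⟩ := Finset.mem_erase.1 he
    have h1 := h.2.1 e heTE
    exact ⟨Finset.mem_erase.2 ⟨fun hr => hene (huniqr e heTE hr), h1.1⟩,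
      Finset.mem_erase.2 ⟨hne2 e heTE, h1.2.1⟩, h1.2.2⟩
  · intro k hkTV hks
    obtain ⟨hkr, hk'⟩ := Finset.mem_erase.1 hkTV
    obtain ⟨j', hex, huniq⟩ := h.2.2.1 k hk' hks
    exact ⟨j', ⟨hex.1, Finset.mem_erase.2 ⟨fun heq => hkr (congrArg Prod.fst heq), hex.2⟩⟩,
      fun y hy => huniq y ⟨hy.1, (Finset.mem_erase.1 hy.2).2⟩⟩
  · intro k hkTV hkp j' hj'
    obtain ⟨hkr, hk'⟩ := Finset.mem_erase.1 hkTV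
    exact Finset.mem_erase.2 ⟨fun heq => hkr (congrArg Prod.fst heq),
      h.2.2.2.1 k hk' hkp j' hj'⟩
  · intro k hkTV hkj
    obtain ⟨hkr, hk'⟩ := Finset.mem_erase.1 hkTV
    obtain ⟨e, he, he2⟩ := h.2.2.2.2 k hk' hkr
    refine ⟨e, Finset.mem_erase.2 ⟨fun heq => hkj ?_, he⟩, he2⟩
    rw [← he2, heq]

lemma split_tree_prod {S : SPN N n} (hD : S.Decomposable) {r : Fin N}
    (hk : S.kind r = NodeKind.prod) {TV : Finset (Fin N)} {TE : Finset (Fin N × Fin N)}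
    (h : S.IsTreeAt r TV TE) {j : Fin N} (hj : j ∈ S.children r) :
    S.IsTreeAt j (TV.filter (fun m => m ≠ r ∧ S.scope m ⊆ S.scope j))
      (TE.filter (fun e => e.1 ≠ r ∧ S.scope e.1 ⊆ S.scope j)) := by
  have hscope_ne : ∀ j' ∈ S.children r, j' ≠ j →
      ∀ m : Fin N, S.scope m ⊆ S.scope j' → S.scope m ⊆ S.scope j → False := by
    intro j' hj' hne m hs1 hs2
    obtain ⟨a, ha⟩ := S.scope_nonempty m
    exact Finset.disjoint_left.1 (hD r hk j' hj' j hj hne) (hs1 ha) (hs2 ha)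
  have hjr : (j : ℕ) < (r : ℕ) := Fin.lt_def.mp (S.child_lt r j hj)
  have hjTV : j ∈ TV := (h.2.1 (r, j) (h.2.2.2.1 r h.1 hk j hj)).2.1
  refine ⟨?_, ?_, ?_, ?_, ?_⟩
  · exact Finset.mem_filter.2 ⟨hjTV, fun hr => by rw [hr] at hjr; omega, subset_rfl⟩
  · intro e he
    obtain ⟨heTE, he1r, hesc⟩ := Finset.mem_filter.1 he
    have h1 := h.2.1 e heTE
    have he2r : e.2 ≠ r := by
      intro hr
      have h2 := Fin.lt_def.mp (S.child_lt e.1 e.2 h1.2.2)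
      have h3 : (e.1 : ℕ) ≤ (r : ℕ) := h.le h1.1
      rw [hr] at h2
      omega
    exact ⟨Finset.mem_filter.2 ⟨h1.1, he1r, hesc⟩,
      Finset.mem_filter.2 ⟨h1.2.1, he2r, (child_scope S h1.2.2).trans hesc⟩, h1.2.2⟩
  · intro k hkm hks
    obtain ⟨hkTV, hkr, hksc⟩ := Finset.mem_filter.1 hkm
    obtain ⟨j', hex, huniq⟩ := h.2.2.1 k hkTV hks
    exact ⟨j', ⟨hex.1, Finset.mem_filter.2 ⟨hex.2, hkr, hksc⟩⟩,
      fun y hy => huniq y ⟨hy.1, (Finset.mem_filter.1 hy.2).1⟩⟩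
  · intro k hkm hkp j' hj'
    obtain ⟨hkTV, hkr, hksc⟩ := Finset.mem_filter.1 hkm
    exact Finset.mem_filter.2 ⟨h.2.2.2.1 k hkTV hkp j' hj', hkr, hksc⟩
  · intro k hkm hkj
    obtain ⟨hkTV, hkr, hksc⟩ := Finset.mem_filter.1 hkm
    obtain ⟨e, he, he2⟩ := h.2.2.2.2 k hkTV hkr
    have hE := h.2.1 e he
    have he1r : e.1 ≠ r := by
      intro hr
      have hkc : k ∈ S.children r := by rw [← he2, ← hr]; exact hE.2.2
      exact hscope_ne k hkc hkj k subset_rfl hksc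
    have hesc : S.scope e.1 ⊆ S.scope j := by
      obtain ⟨j'', hj'', hs⟩ := h.exists_child e.1 hE.1 he1r
      have hks2 : S.scope k ⊆ S.scope e.1 := he2 ▸ child_scope S hE.2.2
      by_cases hjj : j'' = j
      · exact hjj ▸ hs
      · exact absurd (hscope_ne j'' hj'' hjj k (hks2.trans hs) hksc) not_false
    exact ⟨e, Finset.mem_filter.2 ⟨he, he1r, hesc⟩, he2⟩

lemma combine_tree_prod {S : SPN N n} (hD : S.Decomposable) {r : Fin N}
    (hk : S.kind r = NodeKind.prod)
    (x : ∀ a ∈ S.children r, Finset (Fin N) × Finset (Fin N × Fin N))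
    (hx : ∀ a (ha : a ∈ S.children r), S.IsTreeAt a (x a ha).1 (x a ha).2) :
    S.IsTreeAt r (insert r ((S.children r).attach.biUnion (fun i => (x i.1 i.2).1)))
      (((S.children r).attach.biUnion (fun i => (x i.1 i.2).2))
        ∪ (S.children r).image (fun i => (r, i))) := by
  have hlt : ∀ a (ha : a ∈ S.children r), ∀ m ∈ (x a ha).1, (m : ℕ) < (r : ℕ) := by
    intro a ha m hm
    have h1 : (m : ℕ) ≤ (a : ℕ) := (hx a ha).le hm
    have h2 := Fin.lt_def.mp (S.child_lt r a ha)
    omega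
  have huniq : ∀ a (ha : a ∈ S.children r), ∀ b (hb : b ∈ S.children r), ∀ m,
      m ∈ (x a ha).1 → m ∈ (x b hb).1 → a = b := by
    intro a ha b hb m h1 h2
    by_contra hab
    exact tree_disjoint hD hk ha hb hab (hx a ha) (hx b hb) h1 h2
  have hmemB : ∀ m, m ∈ (S.children r).attach.biUnion (fun i => (x i.1 i.2).1) ↔
      ∃ a, ∃ ha : a ∈ S.children r, m ∈ (x a ha).1 := by
    intro m
    simp only [Finset.mem_biUnion, Finset.mem_attach, true_and, Subtype.exists]
  refine ⟨Finset.mem_insert_self _ _, ?_, ?_, ?_, ?_⟩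
  · intro e he
    rcases Finset.mem_union.1 he with hb | hi
    · obtain ⟨a, -, hea⟩ := Finset.mem_biUnion.1 hb
      have h1 := (hx a.1 a.2).2.1 e hea
      exact ⟨Finset.mem_insert_of_mem ((hmemB e.1).2 ⟨a.1, a.2, h1.1⟩),
        Finset.mem_insert_of_mem ((hmemB e.2).2 ⟨a.1, a.2, h1.2.1⟩), h1.2.2⟩
    · obtain ⟨a, ha, heq⟩ := Finset.mem_image.1 hi
      subst heq
      exact ⟨Finset.mem_insert_self _ _,
        Finset.mem_insert_of_mem ((hmemB a).2 ⟨a, ha, (hx a ha).1⟩), ha⟩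
  · intro k hkm hks
    rcases Finset.mem_insert.1 hkm with heq | hkB
    · subst heq
      exact absurd (hk.symm.trans hks) (by decide)
    · obtain ⟨a, ha, hk1⟩ := (hmemB k).1 hkB
      obtain ⟨j', hex, huq⟩ := (hx a ha).2.2.1 k hk1 hks
      refine ⟨j', ⟨hex.1, Finset.mem_union_left _
        (Finset.mem_biUnion.2 ⟨⟨a, ha⟩, Finset.mem_attach _ _, hex.2⟩)⟩, ?_⟩
      rintro y ⟨hy1, hy2⟩
      rcases Finset.mem_union.1 hy2 with hb | hi
      · obtain ⟨b, -, heb⟩ := Finset.mem_biUnion.1 hb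
        have hkb : k ∈ (x b.1 b.2).1 := ((hx b.1 b.2).2.1 (k, y) heb).1
        have hab : a = b.1 := huniq a ha b.1 b.2 k hk1 hkb
        subst hab
        exact huq y ⟨hy1, heb⟩
      · obtain ⟨b, hb2, heq⟩ := Finset.mem_image.1 hi
        have hkr2 : k = r := (congrArg Prod.fst heq).symm
        have := hlt a ha k hk1
        rw [hkr2] at this
        omega
  · intro k hkm hkp j' hj'
    rcases Finset.mem_insert.1 hkm with heq | hkB
    · subst heq
      exact Finset.mem_union_right _ (Finset.mem_image.2 ⟨j', hj', rfl⟩)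
    · obtain ⟨a, ha, hk1⟩ := (hmemB k).1 hkB
      exact Finset.mem_union_left _ (Finset.mem_biUnion.2 ⟨⟨a, ha⟩, Finset.mem_attach _ _,
        (hx a ha).2.2.2.1 k hk1 hkp j' hj'⟩)
  · intro k hkm hkr
    have hkB : k ∈ (S.children r).attach.biUnion (fun i => (x i.1 i.2).1) := by
      rcases Finset.mem_insert.1 hkm with heq | hkB
      · exact absurd heq hkr
      · exact hkB
    obtain ⟨a, ha, hk1⟩ := (hmemB k).1 hkB
    by_cases hka : k = a
    · exact ⟨(r, a), Finset.mem_union_right _ (Finset.mem_image.2 ⟨a, ha, rfl⟩), hka ▸ rfl⟩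
    · obtain ⟨e, he, he2⟩ := (hx a ha).2.2.2.2 k hk1 hka
      exact ⟨e, Finset.mem_union_left _
        (Finset.mem_biUnion.2 ⟨⟨a, ha⟩, Finset.mem_attach _ _, he⟩), he2⟩

lemma recombine {S : SPN N n} {r : Fin N}
    (hk : S.kind r = NodeKind.prod) {TV : Finset (Fin N)} {TE : Finset (Fin N × Fin N)}
    (h : S.IsTreeAt r TV TE) :
    TV = insert r ((S.children r).attach.biUnion
        (fun i => TV.filter (fun m => m ≠ r ∧ S.scope m ⊆ S.scope i.1))) ∧
    TE = ((S.children r).attach.biUnion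
        (fun i => TE.filter (fun e => e.1 ≠ r ∧ S.scope e.1 ⊆ S.scope i.1)))
      ∪ (S.children r).image (fun i => (r, i)) := by
  constructor
  · ext m
    constructor
    · intro hm
      by_cases hmr : m = r
      · exact hmr ▸ Finset.mem_insert_self _ _
      · obtain ⟨j, hj, hs⟩ := h.exists_child m hm hmr
        exact Finset.mem_insert_of_mem (Finset.mem_biUnion.2
          ⟨⟨j, hj⟩, Finset.mem_attach _ _, Finset.mem_filter.2 ⟨hm, hmr, hs⟩⟩)
    · intro hm
      rcases Finset.mem_insert.1 hm with heq | hmB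
      · exact heq ▸ h.1
      · obtain ⟨j, -, hmf⟩ := Finset.mem_biUnion.1 hmB
        exact (Finset.mem_filter.1 hmf).1
  · ext e
    constructor
    · intro he
      by_cases her : e.1 = r
      · refine Finset.mem_union_right _ (Finset.mem_image.2 ⟨e.2, ?_, ?_⟩)
        · rw [← her]
          exact (h.2.1 e he).2.2
        · rw [← her]
      · obtain ⟨j, hj, hs⟩ := h.exists_child e.1 (h.2.1 e he).1 her
        exact Finset.mem_union_left _ (Finset.mem_biUnion.2
          ⟨⟨j, hj⟩, Finset.mem_attach _ _, Finset.mem_filter.2 ⟨he, her, hs⟩⟩)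
    · intro he
      rcases Finset.mem_union.1 he with hb | hi
      · obtain ⟨j, -, hef⟩ := Finset.mem_biUnion.1 hb
        exact (Finset.mem_filter.1 hef).1
      · obtain ⟨j, hj, heq⟩ := Finset.mem_image.1 hi
        exact heq ▸ h.2.2.2.1 r h.1 hk j hj

lemma resplit {S : SPN N n} (hD : S.Decomposable) {r : Fin N}
    (hk : S.kind r = NodeKind.prod)
    (x : ∀ a ∈ S.children r, Finset (Fin N) × Finset (Fin N × Fin N))
    (hx : ∀ a (ha : a ∈ S.children r), S.IsTreeAt a (x a ha).1 (x a ha).2)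
    {j : Fin N} (hj : j ∈ S.children r) :
    (insert r ((S.children r).attach.biUnion (fun i => (x i.1 i.2).1))).filter
        (fun m => m ≠ r ∧ S.scope m ⊆ S.scope j) = (x j hj).1 ∧
    ((((S.children r).attach.biUnion (fun i => (x i.1 i.2).2))
        ∪ (S.children r).image (fun i => (r, i)))).filter
        (fun e => e.1 ≠ r ∧ S.scope e.1 ⊆ S.scope j) = (x j hj).2 := by
  have hscope_ne : ∀ j' ∈ S.children r, j' ≠ j →
      ∀ m : Fin N, S.scope m ⊆ S.scope j' → S.scope m ⊆ S.scope j → False := by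
    intro j' hj' hne m hs1 hs2
    obtain ⟨a, ha⟩ := S.scope_nonempty m
    exact Finset.disjoint_left.1 (hD r hk j' hj' j hj hne) (hs1 ha) (hs2 ha)
  have hltr : ∀ a (ha : a ∈ S.children r), ∀ m ∈ (x a ha).1, (m : ℕ) < (r : ℕ) := by
    intro a ha m hm
    have h1 : (m : ℕ) ≤ (a : ℕ) := (hx a ha).le hm
    have h2 := Fin.lt_def.mp (S.child_lt r a ha)
    omega
  have hhome : ∀ a (ha : a ∈ S.children r), ∀ m ∈ (x a ha).1, S.scope m ⊆ S.scope j →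
      a = j := by
    intro a ha m hm hs
    by_contra hne
    exact hscope_ne a ha hne m ((hx a ha).scope_subset hm) hs
  constructor
  · ext m
    simp only [Finset.mem_filter, Finset.mem_insert, Finset.mem_biUnion, Finset.mem_attach,
      true_and, Subtype.exists]
    constructor
    · rintro ⟨hm | ⟨a, ha, hma⟩, hmr, hms⟩
      · exact absurd hm hmr
      · have hae := hhome a ha m hma hms
        subst hae
        exact hma
    · intro hm
      refine ⟨Or.inr ⟨j, hj, hm⟩, ?_, (hx j hj).scope_subset hm⟩
      intro hmr
      have := hltr j hj m hm
      rw [hmr] at this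
      omega
  · ext e
    simp only [Finset.mem_filter, Finset.mem_union, Finset.mem_biUnion, Finset.mem_attach,
      true_and, Subtype.exists, Finset.mem_image]
    constructor
    · rintro ⟨⟨a, ha, hea⟩ | ⟨a, ha, heq⟩, her, hes⟩
      · have he1 : e.1 ∈ (x a ha).1 := ((hx a ha).2.1 e hea).1
        have hae := hhome a ha e.1 he1 hes
        subst hae
        exact hea
      · exact absurd (congrArg Prod.fst heq).symm her
    · intro he
      have he1 : e.1 ∈ (x j hj).1 := ((hx j hj).2.1 e he).1
      refine ⟨Or.inl ⟨j, hj, he⟩, ?_, (hx j hj).scope_subset he1⟩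
      intro her
      have := hltr j hj e.1 he1
      rw [her] at this
      omega

lemma twt_insert_sum {S : SPN N n} {leaf : Fin N → ℝ} {w : Fin N → Fin N → ℝ} {r j : Fin N}
    (hk : S.kind r = NodeKind.sum)
    {TV : Finset (Fin N)} {TE : Finset (Fin N × Fin N)}
    (hrTV : r ∉ TV) (hrTE : (r, j) ∉ TE) :
    S.twt leaf w (insert r TV, insert (r, j) TE) = w r j * S.twt leaf w (TV, TE) := by
  simp only [twt]
  rw [Finset.filter_insert, if_pos hk,
    Finset.prod_insert (fun hmem => hrTE (Finset.mem_filter.1 hmem).1),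
    Finset.filter_insert, if_neg (show ¬S.kind r = NodeKind.leaf by rw [hk]; decide)]
  ring

lemma twt_combine_prod {S : SPN N n} (hD : S.Decomposable)
    {leaf : Fin N → ℝ} {w : Fin N → Fin N → ℝ} {r : Fin N}
    (hk : S.kind r = NodeKind.prod)
    (x : ∀ a ∈ S.children r, Finset (Fin N) × Finset (Fin N × Fin N))
    (hx : ∀ a (ha : a ∈ S.children r), S.IsTreeAt a (x a ha).1 (x a ha).2) :
    S.twt leaf w (insert r ((S.children r).attach.biUnion (fun i => (x i.1 i.2).1)),
        ((S.children r).attach.biUnion (fun i => (x i.1 i.2).2))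
          ∪ (S.children r).image (fun i => (r, i)))
      = ∏ i ∈ (S.children r).attach, S.twt leaf w (x i.1 i.2) := by
  have hdisjV : (↑(S.children r).attach : Set {y // y ∈ S.children r}).PairwiseDisjoint
      (fun i : {y // y ∈ S.children r} => (x i.1 i.2).1) := by
    intro a _ b _ hab
    refine Finset.disjoint_left.2 fun m hma hmb => ?_
    exact tree_disjoint hD hk a.2 b.2 (fun hv => hab (Subtype.ext hv)) (hx a.1 a.2)
      (hx b.1 b.2) hma hmb
  have hdisjE : (↑(S.children r).attach : Set {y // y ∈ S.children r}).PairwiseDisjoint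
      (fun i : {y // y ∈ S.children r} => (x i.1 i.2).2) := by
    intro a _ b _ hab
    refine Finset.disjoint_left.2 fun e hea heb => ?_
    exact tree_disjoint hD hk a.2 b.2 (fun hv => hab (Subtype.ext hv)) (hx a.1 a.2)
      (hx b.1 b.2) ((hx a.1 a.2).2.1 e hea).1 ((hx b.1 b.2).2.1 e heb).1
  have hdisjVf : (↑(S.children r).attach : Set {y // y ∈ S.children r}).PairwiseDisjoint
      (fun i : {y // y ∈ S.children r} =>
        ((x i.1 i.2).1).filter (fun k => S.kind k = NodeKind.leaf)) :=
    fun a ha b hb hab => Disjoint.mono (Finset.filter_subset _ _) (Finset.filter_subset _ _)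
      (hdisjV ha hb hab)
  have hdisjEf : (↑(S.children r).attach : Set {y // y ∈ S.children r}).PairwiseDisjoint
      (fun i : {y // y ∈ S.children r} =>
        ((x i.1 i.2).2).filter (fun e => S.kind e.1 = NodeKind.sum)) :=
    fun a ha b hb hab => Disjoint.mono (Finset.filter_subset _ _) (Finset.filter_subset _ _)
      (hdisjE ha hb hab)
  have himg : ((S.children r).image (fun i => ((r, i) : Fin N × Fin N))).filter
      (fun e => S.kind e.1 = NodeKind.sum) = ∅ := by
    rw [Finset.eq_empty_iff_forall_notMem]
    intro e he
    obtain ⟨hei, hp⟩ := Finset.mem_filter.1 he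
    obtain ⟨a, -, heq⟩ := Finset.mem_image.1 hei
    rw [← heq] at hp
    exact absurd (hk.symm.trans hp) (by decide)
  simp only [twt]
  rw [Finset.filter_union, himg, Finset.union_empty, Finset.filter_insert,
    if_neg (show ¬S.kind r = NodeKind.leaf by rw [hk]; decide),
    Finset.filter_biUnion, Finset.filter_biUnion,
    Finset.prod_biUnion hdisjEf, Finset.prod_biUnion hdisjVf, ← Finset.prod_mul_distrib]

lemma key (S : SPN N n) (hD : S.Decomposable) (leaf : Fin N → ℝ) (w : Fin N → Fin N → ℝ) :
    ∀ M : ℕ, ∀ r : Fin N, (r : ℕ) < M →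
      S.value leaf w r = ∑ p ∈ S.treeSet r, S.twt leaf w p := by
  intro M
  induction M with
  | zero => intro r hr; omega
  | succ M ih =>
    intro r hr
    rcases hk : S.kind r with _ | _ | _
    · -- sum node
      rw [value]
      simp only [hk]
      have hstep : ∀ j : {y // y ∈ S.children r},
          w r j.1 * S.value leaf w j.1 = ∑ T ∈ S.treeSet j.1, w r j.1 * S.twt leaf w T := by
        intro j
        rw [ih j.1 (by have := Fin.lt_def.mp (S.child_lt r j.1 j.2); omega), Finset.mul_sum]
      rw [Finset.sum_congr rfl (fun j _ => hstep j),
        Finset.sum_sigma' (S.children r).attach (fun j => S.treeSet j.1)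
          (fun j T => w r j.1 * S.twt leaf w T)]
      refine Finset.sum_bij (fun a _ => ((insert r a.2.1, insert (r, a.1.1) a.2.2) :
        Finset (Fin N) × Finset (Fin N × Fin N))) ?_ ?_ ?_ ?_
      · intro a ha
        have h2 := mem_treeSet.1 (Finset.mem_sigma.1 ha).2
        exact mem_treeSet.2 (insert_tree_sum hk a.1.2 h2)
      · intro a₁ ha₁ a₂ ha₂ heq
        obtain ⟨⟨j₁, hj₁⟩, T₁⟩ := a₁
        obtain ⟨⟨j₂, hj₂⟩, T₂⟩ := a₂
        have h₁ := mem_treeSet.1 (Finset.mem_sigma.1 ha₁).2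
        have h₂ := mem_treeSet.1 (Finset.mem_sigma.1 ha₂).2
        have hb₁ : ∀ y, ((r : Fin N), y) ∉ T₁.2 := by
          intro y hy
          have h1 : (r : ℕ) ≤ (j₁ : ℕ) := h₁.le (h₁.2.1 _ hy).1
          have h2 := Fin.lt_def.mp (S.child_lt r j₁ hj₁)
          omega
        have hb₂ : ∀ y, ((r : Fin N), y) ∉ T₂.2 := by
          intro y hy
          have h1 : (r : ℕ) ≤ (j₂ : ℕ) := h₂.le (h₂.2.1 _ hy).1
          have h2 := Fin.lt_def.mp (S.child_lt r j₂ hj₂)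
          omega
        have hr₁ : r ∉ T₁.1 := fun hm => by
          have h1 : (r : ℕ) ≤ (j₁ : ℕ) := h₁.le hm
          have h2 := Fin.lt_def.mp (S.child_lt r j₁ hj₁)
          omega
        have hr₂ : r ∉ T₂.1 := fun hm => by
          have h1 : (r : ℕ) ≤ (j₂ : ℕ) := h₂.le hm
          have h2 := Fin.lt_def.mp (S.child_lt r j₂ hj₂)
          omega
        have heqV := congrArg Prod.fst heq
        have heqE := congrArg Prod.snd heq
        simp only at heqV heqE
        have hjj : j₁ = j₂ := by
          have hmem : ((r : Fin N), j₁) ∈ insert (r, j₂) T₂.2 := by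
            rw [← heqE]
            exact Finset.mem_insert_self _ _
          rcases Finset.mem_insert.1 hmem with heq2 | hmem2
          · exact congrArg Prod.snd heq2
          · exact absurd hmem2 (hb₂ j₁)
        subst hjj
        have hTV : T₁.1 = T₂.1 := by
          have hcong := congrArg (fun s => Finset.erase s r) heqV
          simpa [Finset.erase_insert hr₁, Finset.erase_insert hr₂] using hcong
        have hTE : T₁.2 = T₂.2 := by
          have hcong := congrArg (fun s => Finset.erase s ((r : Fin N), j₁)) heqE
          simpa [Finset.erase_insert (hb₁ j₁), Finset.erase_insert (hb₂ j₁)] using hcong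
        have hT : T₁ = T₂ := Prod.ext hTV hTE
        subst hT
        rfl
      · intro b hb
        have hb' := mem_treeSet.1 hb
        obtain ⟨j, ⟨hjc, hje⟩, -⟩ := hb'.2.2.1 r hb'.1 hk
        refine ⟨⟨⟨j, hjc⟩, (b.1.erase r, b.2.erase (r, j))⟩, ?_, ?_⟩
        · exact Finset.mem_sigma.2 ⟨Finset.mem_attach _ _,
            mem_treeSet.2 (erase_tree_sum hk hb' hjc hje)⟩
        · exact Prod.ext (Finset.insert_erase hb'.1) (Finset.insert_erase hje)
      · intro a ha
        have h2 := mem_treeSet.1 (Finset.mem_sigma.1 ha).2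
        have hrTV : r ∉ a.2.1 := fun hm => by
          have h1 : (r : ℕ) ≤ (a.1.1 : ℕ) := h2.le hm
          have h3 := Fin.lt_def.mp (S.child_lt r a.1.1 a.1.2)
          omega
        have hrTE : ((r : Fin N), a.1.1) ∉ a.2.2 := fun hy => by
          have h1 : (r : ℕ) ≤ (a.1.1 : ℕ) := h2.le (h2.2.1 _ hy).1
          have h3 := Fin.lt_def.mp (S.child_lt r a.1.1 a.1.2)
          omega
        exact (twt_insert_sum hk hrTV hrTE).symm
    · -- product node
      rw [value]
      simp only [hk]
      rw [Finset.prod_attach (S.children r) (fun j => S.value leaf w j),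
        Finset.prod_congr rfl (fun j hj => ih j
          (by have := Fin.lt_def.mp (S.child_lt r j hj); omega)),
        Finset.prod_sum (S.children r) (fun j => S.treeSet j)
          (fun _ T => S.twt leaf w T)]
      refine Finset.sum_bij (fun x _ => ((insert r ((S.children r).attach.biUnion
          (fun i => (x i.1 i.2).1)),
        ((S.children r).attach.biUnion (fun i => (x i.1 i.2).2))
          ∪ (S.children r).image (fun i => (r, i))) :
        Finset (Fin N) × Finset (Fin N × Fin N))) ?_ ?_ ?_ ?_
      · intro x hx
        have hx' : ∀ a (ha : a ∈ S.children r), S.IsTreeAt a (x a ha).1 (x a ha).2 :=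
          fun a ha => mem_treeSet.1 (Finset.mem_pi.1 hx a ha)
        exact mem_treeSet.2 (combine_tree_prod hD hk x hx')
      · intro x₁ hx₁ x₂ hx₂ heq
        have hx₁' : ∀ a (ha : a ∈ S.children r), S.IsTreeAt a (x₁ a ha).1 (x₁ a ha).2 :=
          fun a ha => mem_treeSet.1 (Finset.mem_pi.1 hx₁ a ha)
        have hx₂' : ∀ a (ha : a ∈ S.children r), S.IsTreeAt a (x₂ a ha).1 (x₂ a ha).2 :=
          fun a ha => mem_treeSet.1 (Finset.mem_pi.1 hx₂ a ha)
        have heqV := congrArg Prod.fst heq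
        have heqE := congrArg Prod.snd heq
        simp only at heqV heqE
        funext a ha
        have r1 := resplit hD hk x₁ hx₁' ha
        have r2 := resplit hD hk x₂ hx₂' ha
        refine Prod.ext ?_ ?_
        · rw [← r1.1, ← r2.1, heqV]
        · rw [← r1.2, ← r2.2, heqE]
      · intro b hb
        have hb' := mem_treeSet.1 hb
        refine ⟨fun a _ => (b.1.filter (fun m => m ≠ r ∧ S.scope m ⊆ S.scope a),
            b.2.filter (fun e => e.1 ≠ r ∧ S.scope e.1 ⊆ S.scope a)), ?_, ?_⟩
        · exact Finset.mem_pi.2 fun a ha => mem_treeSet.2 (split_tree_prod hD hk hb' ha)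
        · exact Prod.ext (recombine hk hb').1.symm (recombine hk hb').2.symm
      · intro x hx
        have hx' : ∀ a (ha : a ∈ S.children r), S.IsTreeAt a (x a ha).1 (x a ha).2 :=
          fun a ha => mem_treeSet.1 (Finset.mem_pi.1 hx a ha)
        exact (twt_combine_prod hD hk x hx').symm
    · -- leaf node
      rw [value]
      simp only [hk]
      have hset : S.treeSet r = {(({r} : Finset (Fin N)), (∅ : Finset (Fin N × Fin N)))} := by
        ext p
        rw [mem_treeSet, Finset.mem_singleton]
        constructor
        · intro hp
          have hch : S.children r = ∅ := (S.leaf_iff r).1 hk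
          have hTV : p.1 = {r} := by
            ext m
            rw [Finset.mem_singleton]
            constructor
            · intro hm
              by_contra hmr
              obtain ⟨j, hj, -⟩ := hp.exists_child m hm hmr
              rw [hch] at hj
              exact absurd hj (Finset.notMem_empty j)
            · intro hm
              exact hm ▸ hp.1
          have hTE : p.2 = ∅ := by
            rw [Finset.eq_empty_iff_forall_notMem]
            intro e he
            have h1 := (hp.2.1 e he).1
            rw [hTV, Finset.mem_singleton] at h1
            have h2 := (hp.2.1 e he).2.2
            rw [h1, hch] at h2
            exact absurd h2 (Finset.notMem_empty _)
          exact Prod.ext hTV hTE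
        · intro hp
          rw [hp]
          refine ⟨Finset.mem_singleton_self r, ?_, ?_, ?_, ?_⟩
          · intro e he
            exact absurd he (Finset.notMem_empty e)
          · intro k hkm hks
            rw [Finset.mem_singleton] at hkm
            exact absurd (hk.symm.trans (hkm ▸ hks)) (by decide)
          · intro k hkm hkp
            rw [Finset.mem_singleton] at hkm
            exact absurd (hk.symm.trans (hkm ▸ hkp)) (by decide)
          · intro k hkm hkr
            rw [Finset.mem_singleton] at hkm
            exact absurd hkm hkr
      rw [hset, Finset.sum_singleton]
      simp [twt, Finset.filter_singleton, hk]

end SPN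

/-- For a complete and decomposable SPN `S`, the root value `V_root(x; w)` equals
the sum over all induced trees of the product of the sum-edge weights in the tree times the
product of the leaf values in the tree (the induced-tree decomposition of the network
polynomial). -/
theorem SPN.value_eq_sum_induced_trees {N n : ℕ} (S : SPN N n)
    (hC : S.Complete) (hD : S.Decomposable)
    (leaf : Fin N → ℝ) (hleaf : ∀ k, 0 < leaf k)
    (w : Fin N → Fin N → ℝ) (hw : ∀ k j, 0 < w k j) :
    S.value leaf w S.root
      = ∑ p ∈ Finset.univ.filter
            (fun p : Finset (Fin N) × Finset (Fin N × Fin N) => S.IsInducedTree p.1 p.2),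
          (∏ e ∈ p.2.filter (fun e => S.kind e.1 = NodeKind.sum), w e.1 e.2)
            * ∏ k ∈ p.1.filter (fun k => S.kind k = NodeKind.leaf), leaf k := by
  exact S.key hD leaf w ((S.root : ℕ) + 1) S.root (Nat.lt_succ_self _)
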